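/- Let G = (V,E) be a finite graph with n vertices and let k ≥ 1. Let G^(k) be the k-clone of G, the graph obtained by replacing each vertex v by k independent copies v_1,…,v_k, and joining every copy of u to every copy of v whenever uv ∈ E (copies of the same vertex are not joined). Then the univariate independent set polynomial satisfies I(G^(k); x) = I(G; (1+x)^k − 1) as an identity of polynomials in x. -/

import Mathlib

open Finset Polynomial
open scoped Classical

/-- A finset of vertices is independent in `G` if no two of its members are adjacent. -/
def IndepSet {V : Type*} (G : SimpleGraph V) (A : Finset V) : Prop :=
  ∀ u ∈ A, ∀ v ∈ A, ¬ G.Adj u v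

/-- The (univariate) independent set polynomial `I(G; X) = Σ_{A independent} X^{|A|}`. -/
noncomputable def indPolyX {V : Type*} [Fintype V] (G : SimpleGraph V) : Polynomial ℚ :=
  ∑ A : Finset V, if IndepSet G A then (Polynomial.X : Polynomial ℚ) ^ A.card else 0

/-- The `k`-clone of `G`: each vertex is replaced by `k` independent copies, and every
copy of `u` is joined to every copy of `v` whenever `uv` is an edge of `G`. -/
def kClone {V : Type*} (G : SimpleGraph V) (k : ℕ) : SimpleGraph (V × Fin k) where
  Adj p q := G.Adj p.1 q.1
  symm := ⟨fun p q h => G.symm.symm p.1 q.1 h⟩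
  loopless := ⟨fun p h => G.loopless.irrefl p.1 h⟩

section Aux

variable {V : Type*} [Fintype V] {k : ℕ}

/-- The support of a function `V → Finset (Fin k)`. -/
noncomputable def suppF (f : V → Finset (Fin k)) : Finset V :=
  Finset.univ.filter fun v => (f v).Nonempty

lemma sum_X_pow_card (k : ℕ) :
    ∑ B : Finset (Fin k), (X : Polynomial ℚ) ^ B.card = (1 + X) ^ k := by
  have h := Finset.prod_add (fun _ : Fin k => (X : Polynomial ℚ)) (fun _ => 1) Finset.univ
  simp only [Finset.prod_const_one, mul_one, Finset.prod_const, Finset.powerset_univ] at h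
  rw [add_comm]
  simpa using h.symm

lemma sum_X_pow_card_nonempty (k : ℕ) :
    ∑ B ∈ (Finset.univ : Finset (Finset (Fin k))).filter Finset.Nonempty,
      (X : Polynomial ℚ) ^ B.card = (1 + X) ^ k - 1 := by
  have hsplit := Finset.sum_filter_add_sum_filter_not (Finset.univ : Finset (Finset (Fin k)))
    Finset.Nonempty (fun B => (X : Polynomial ℚ) ^ B.card)
  have hempty : (Finset.univ : Finset (Finset (Fin k))).filter (fun B => ¬ B.Nonempty)
      = {∅} := by
    ext B
    simp [Finset.not_nonempty_iff_eq_empty]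
  rw [hempty] at hsplit
  simp only [Finset.sum_singleton, Finset.card_empty, pow_zero] at hsplit
  rw [sum_X_pow_card] at hsplit
  exact eq_sub_of_add_eq hsplit

/-- The key fiber computation. -/
lemma fiber_sum (S : Finset V) :
    ∑ f ∈ (Finset.univ : Finset (V → Finset (Fin k))).filter (fun f => suppF f = S),
      (X : Polynomial ℚ) ^ (∑ v, (f v).card)
      = ((1 + X : Polynomial ℚ) ^ k - 1) ^ S.card := by
  classical
  set t : Finset (Finset (Fin k)) := Finset.univ.filter Finset.Nonempty with ht
  have hrhs : ((1 + X : Polynomial ℚ) ^ k - 1) ^ S.card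
      = ∏ v : S, ∑ B ∈ t, (X : Polynomial ℚ) ^ B.card := by
    rw [Finset.prod_const, sum_X_pow_card_nonempty, Finset.card_univ, Fintype.card_coe]
  rw [hrhs, Finset.prod_univ_sum (fun _ : ↥S => t) (fun _ B => (X : Polynomial ℚ) ^ B.card)]
  refine Finset.sum_nbij' (i := fun f => fun v : S => f v.1)
    (j := fun p => fun v : V => if h : v ∈ S then p ⟨v, h⟩ else ∅) ?_ ?_ ?_ ?_ ?_
  · intro f hf
    simp only [Finset.mem_filter, Finset.mem_univ, true_and] at hf
    rw [Fintype.mem_piFinset]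
    intro v
    have : (f v.1).Nonempty := by
      have : (v : V) ∈ suppF f := hf ▸ v.2
      simpa [suppF] using this
    simpa [ht] using this
  · intro p hp
    rw [Fintype.mem_piFinset] at hp
    simp only [Finset.mem_filter, Finset.mem_univ, true_and]
    ext v
    simp only [suppF, Finset.mem_filter, Finset.mem_univ, true_and]
    constructor
    · intro hne
      by_contra hv
      simp [hv] at hne
    · intro hv
      have := hp ⟨v, hv⟩
      simp only [ht, Finset.mem_filter, Finset.mem_univ, true_and] at this
      simpa [hv] using this
  · intro f hf
    simp only [Finset.mem_filter, Finset.mem_univ, true_and] at hf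
    funext v
    by_cases hv : v ∈ S
    · simp [hv]
    · simp only [hv, dif_neg, not_false_iff]
      have : ¬ (f v).Nonempty := by
        intro hne
        have : v ∈ suppF f := by simpa [suppF] using hne
        exact hv (hf ▸ this)
      exact (Finset.not_nonempty_iff_eq_empty.mp this).symm
  · intro p hp
    funext v
    simp
  · intro f hf
    simp only [Finset.mem_filter, Finset.mem_univ, true_and] at hf
    have h1 : ∑ v, (f v).card = ∑ v ∈ S, (f v).card := by
      refine (Finset.sum_subset (Finset.subset_univ S) ?_).symm
      intro v _ hv
      have hne : ¬ (f v).Nonempty := fun hne => hv (hf ▸ (by simpa [suppF] using hne))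
      simp [Finset.not_nonempty_iff_eq_empty.mp hne]
    rw [h1, ← Finset.sum_attach S (fun v => (f v).card),
      ← Finset.prod_pow_eq_pow_sum, Finset.univ_eq_attach]

end Aux

/-- Cloning identity: `I(G^(k); x) = I(G; (1+x)^k - 1)` as an identity of polynomials. -/
theorem kClone_indPoly {V : Type*} [Fintype V] (G : SimpleGraph V) (k : ℕ) (hk : 1 ≤ k) :
    indPolyX (kClone G k)
      = (indPolyX G).comp ((1 + Polynomial.X : Polynomial ℚ) ^ k - 1) := by
  classical
  -- rewrite RHS
  have hRHS : (indPolyX G).comp ((1 + Polynomial.X : Polynomial ℚ) ^ k - 1)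
      = ∑ S : Finset V, if IndepSet G S
          then ((1 + Polynomial.X : Polynomial ℚ) ^ k - 1) ^ S.card else 0 := by
    unfold indPolyX
    rw [Polynomial.sum_comp]
    refine Finset.sum_congr rfl fun S _ => ?_
    split_ifs with h
    · rw [Polynomial.X_pow_comp]
    · rw [Polynomial.zero_comp]
  rw [hRHS]
  -- reindex LHS by functions V → Finset (Fin k)
  have hFbij : Function.Bijective
      (fun f : V → Finset (Fin k) =>
        Finset.univ.filter fun p : V × Fin k => p.2 ∈ f p.1) := by
    constructor
    · intro f g hfg
      funext v
      ext i
      have := Finset.ext_iff.mp hfg (v, i)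
      simpa using this
    · intro A
      refine ⟨fun v => Finset.univ.filter fun i => (v, i) ∈ A, ?_⟩
      ext ⟨v, i⟩
      simp
  have hLHS : indPolyX (kClone G k)
      = ∑ f : V → Finset (Fin k),
          if IndepSet G (suppF f)
          then (Polynomial.X : Polynomial ℚ) ^ (∑ v, (f v).card) else 0 := by
    unfold indPolyX
    rw [← Fintype.sum_bijective _ hFbij _ _ (fun f => ?_)]
    set A := Finset.univ.filter fun p : V × Fin k => p.2 ∈ f p.1 with hA
    have hmem : ∀ v i, (v, i) ∈ A ↔ i ∈ f v := by intro v i; simp [hA]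
    have hindep : IndepSet (kClone G k) A ↔ IndepSet G (suppF f) := by
      constructor
      · intro h u hu v hv
        simp only [suppF, Finset.mem_filter, Finset.mem_univ, true_and] at hu hv
        obtain ⟨i, hi⟩ := hu
        obtain ⟨j, hj⟩ := hv
        exact h (u, i) ((hmem u i).mpr hi) (v, j) ((hmem v j).mpr hj)
      · intro h p hp q hq
        have hp1 : p.2 ∈ f p.1 := (hmem p.1 p.2).mp (by cases p; exact hp)
        have hq1 : q.2 ∈ f q.1 := (hmem q.1 q.2).mp (by cases q; exact hq)
        exact h p.1 (by simp [suppF]; exact ⟨p.2, hp1⟩) q.1 (by simp [suppF]; exact ⟨q.2, hq1⟩)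
    have hcard : A.card = ∑ v, (f v).card := by
      rw [hA, Finset.card_filter]
      rw [Fintype.sum_prod_type]
      refine Finset.sum_congr rfl fun v _ => ?_
      simp [Finset.card_filter]
    rw [hindep, hcard]
  rw [hLHS]
  rw [← Finset.sum_fiberwise_of_maps_to (g := suppF)
    (fun f _ => Finset.mem_univ (suppF f))]
  refine Finset.sum_congr rfl fun S _ => ?_
  have : ∀ f ∈ (Finset.univ : Finset (V → Finset (Fin k))).filter (fun f => suppF f = S),
      (if IndepSet G (suppF f) then (Polynomial.X : Polynomial ℚ) ^ (∑ v, (f v).card) else 0)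
      = (if IndepSet G S then (Polynomial.X : Polynomial ℚ) ^ (∑ v, (f v).card) else 0) := by
    intro f hf
    simp only [Finset.mem_filter] at hf
    rw [hf.2]
  rw [Finset.sum_congr rfl this]
  split_ifs with h
  · exact fiber_sum S
  · simp
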